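/- Let s > 0 and θ ∈ (0, π/2), and let D = {(r cos v, r sin v) : r ≥ 0, v ∈ [0, θ]} ⊆ ℝ². Define F : ℝ² → ℝ by F(w_x, w_y) = ∫_D (2πs)^{−1} exp(−((x − w_x)² + (y − w_y)²)/(2s)) dx dy. Then F is differentiable and, for every (w_x, w_y), ∂F/∂w_x (w_x, w_y) = [exp(−(w_y/tan θ − w_x)²/(2s(1 + 1/tan²θ)))/√(2πs(1 + 1/tan²θ))]·Φ((w_x/tan θ + w_y)/√(s(1 + 1/tan²θ))), where Φ is the standard normal distribution function. -/

import Mathlib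

open MeasureTheory Real Set Filter Topology

/-- The standard normal distribution function Φ. -/
noncomputable def stdNormalCDF (y : ℝ) : ℝ :=
  ∫ z in Set.Iic y, (Real.sqrt (2 * Real.pi))⁻¹ * Real.exp (-z ^ 2 / 2)

lemma integrable_gauss {s : ℝ} (hs : 0 < s) (w : ℝ) :
    Integrable (fun x : ℝ => Real.exp (-(x - w) ^ 2 / (2 * s))) := by
  have h := (integrable_exp_neg_mul_sq (b := (2*s)⁻¹) (by positivity)).comp_sub_right w
  exact h.congr (Filter.Eventually.of_forall fun x => congrArg Real.exp (by ring))

lemma integrable_lin_gauss {s : ℝ} (hs : 0 < s) (w : ℝ) :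
    Integrable (fun x : ℝ => (x - w) * Real.exp (-(x - w) ^ 2 / (2 * s))) := by
  have h := (integrable_mul_exp_neg_mul_sq (b := (2*s)⁻¹) (by positivity)).comp_sub_right w
  refine h.congr (Filter.Eventually.of_forall fun x => ?_)
  show (x - w) * Real.exp (-(2*s)⁻¹ * (x - w)^2) = _
  rw [show -(2*s)⁻¹ * (x - w)^2 = -(x-w)^2/(2*s) from by ring]

lemma integrable_abs_gauss {s : ℝ} (hs : 0 < s) (w : ℝ) :
    Integrable (fun x : ℝ => (|x - w| + 1) * Real.exp (-(x - w) ^ 2 / (2 * s))) := by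
  have h1 := (integrable_lin_gauss hs w).abs
  have h2 := integrable_gauss hs w
  refine (h1.add h2).congr (Filter.Eventually.of_forall fun x => ?_)
  show |(x - w) * Real.exp (-(x-w)^2/(2*s))| + Real.exp (-(x-w)^2/(2*s)) = _
  rw [abs_mul, abs_of_pos (Real.exp_pos _)]
  ring

lemma integrable_prod_fun {f g : ℝ → ℝ} (hf : Integrable f) (hg : Integrable g) :
    Integrable (fun z : ℝ × ℝ => f z.1 * g z.2) := by
  have h := hf.mul_prod hg
  rwa [← MeasureTheory.Measure.volume_eq_prod] at h

lemma complete_sq {s c : ℝ} (hs : 0 < s) (hc : 0 < c) (wx wy y : ℝ) :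
    -(y - wy)^2/(2*s) + -(y/c - wx)^2/(2*s)
      = -(wy/c - wx)^2/(2*s*(1+1/c^2))
        + -(y - (wy + wx/c)/(1+1/c^2))^2/(2*(s/(1+1/c^2))) := by
  have hk : (0:ℝ) < 1 + 1/c^2 := by positivity
  field_simp
  ring

lemma gauss_inner {s : ℝ} (hs : 0 < s) (wx a : ℝ) :
    ∫ x in Set.Ioi a, (x - wx) / s * Real.exp (-(x - wx) ^ 2 / (2 * s))
      = Real.exp (-(a - wx) ^ 2 / (2 * s)) := by
  have hderiv : ∀ x ∈ Set.Ici a, HasDerivAt (fun x => -Real.exp (-(x - wx)^2 / (2*s)))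
      ((x - wx)/s * Real.exp (-(x - wx)^2/(2*s))) x := by
    intro x _
    have h0 : HasDerivAt (fun x : ℝ => x - wx) 1 x := (hasDerivAt_id x).sub_const wx
    have h1 := ((h0.pow 2).neg).div_const (2*s)
    have h2 := (h1.exp).neg
    refine h2.congr_deriv ?_
    norm_num
    field_simp
  have hint : IntegrableOn (fun x => (x - wx)/s * Real.exp (-(x - wx)^2/(2*s))) (Set.Ioi a) := by
    refine (((integrable_lin_gauss hs wx).const_mul s⁻¹).congr
      (Filter.Eventually.of_forall fun x => by show s⁻¹ * _ = _; ring)).integrableOn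
  have htend : Tendsto (fun x => -Real.exp (-(x - wx)^2 / (2*s))) atTop (𝓝 0) := by
    rw [show (0:ℝ) = -0 from by ring]
    apply Filter.Tendsto.neg
    apply Real.tendsto_exp_atBot.comp
    apply Filter.Tendsto.atBot_div_const (by positivity : (0:ℝ) < 2*s)
    apply Filter.tendsto_neg_atTop_atBot.comp
    apply (tendsto_pow_atTop (two_ne_zero)).comp
    simpa [sub_eq_add_neg] using tendsto_atTop_add_const_right atTop (-wx) tendsto_id
  have h := integral_Ioi_of_hasDerivAt_of_tendsto' hderiv hint htend
  rw [h]
  ring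

lemma stdNormalCDF_eq (y : ℝ) :
    stdNormalCDF y = (Real.sqrt (2 * Real.pi))⁻¹ * ∫ z in Set.Iic y, Real.exp (-z ^ 2 / 2) := by
  rw [stdNormalCDF, integral_const_mul]

lemma gauss_tail {t : ℝ} (ht : 0 < t) (m : ℝ) :
    ∫ y in Set.Ioi (0:ℝ), Real.exp (-(y - m)^2 / (2*t))
      = Real.sqrt t * Real.sqrt (2*Real.pi) * stdNormalCDF (m / Real.sqrt t) := by
  set σ := Real.sqrt t with hσdef
  have hσ : 0 < σ := Real.sqrt_pos.2 ht
  have hσ2 : σ^2 = t := Real.sq_sqrt ht.le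
  set G : ℝ → ℝ := Set.indicator (Set.Iio (m/σ)) (fun z => Real.exp (-z^2/2)) with hG
  have key : ∀ y : ℝ, Set.indicator (Set.Ioi (0:ℝ))
      (fun y => Real.exp (-(y - m)^2 / (2*t))) y = G (σ⁻¹ * (m - y)) := by
    intro y
    have hmem : σ⁻¹ * (m - y) ∈ Set.Iio (m/σ) ↔ y ∈ Set.Ioi (0:ℝ) := by
      simp only [Set.mem_Iio, Set.mem_Ioi, div_eq_inv_mul]
      constructor
      · intro h
        by_contra hy
        push_neg at hy
        have : σ⁻¹ * m ≤ σ⁻¹ * (m - y) := by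
          apply mul_le_mul_of_nonneg_left (by linarith) (by positivity)
        linarith
      · intro h
        apply mul_lt_mul_of_pos_left (by linarith) (by positivity)
    by_cases hy : y ∈ Set.Ioi (0:ℝ)
    · rw [Set.indicator_of_mem hy, hG, Set.indicator_of_mem (hmem.2 hy)]
      congr 1
      rw [← hσ2]
      field_simp
      ring
    · rw [Set.indicator_of_notMem hy, hG, Set.indicator_of_notMem (fun h => hy (hmem.1 h))]
  calc ∫ y in Set.Ioi (0:ℝ), Real.exp (-(y - m)^2 / (2*t))
      = ∫ y, Set.indicator (Set.Ioi (0:ℝ)) (fun y => Real.exp (-(y - m)^2 / (2*t))) y :=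
        (integral_indicator measurableSet_Ioi).symm
    _ = ∫ y, G (σ⁻¹ * (m - y)) := by simp_rw [key]
    _ = ∫ u, G (σ⁻¹ * u) := integral_sub_left_eq_self (fun u => G (σ⁻¹ * u)) volume m
    _ = |σ| • ∫ z, G z := Measure.integral_comp_inv_mul_left G σ
    _ = σ * ∫ z in Set.Iio (m/σ), Real.exp (-z^2/2) := by
        rw [abs_of_pos hσ, hG, integral_indicator measurableSet_Iio, smul_eq_mul]
    _ = σ * ∫ z in Set.Iic (m/σ), Real.exp (-z^2/2) := by
        rw [integral_Iic_eq_integral_Iio]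
    _ = σ * Real.sqrt (2*Real.pi) * stdNormalCDF (m / σ) := by
        rw [stdNormalCDF_eq]
        have h2π : (0:ℝ) < Real.sqrt (2*Real.pi) := Real.sqrt_pos.2 (by positivity)
        field_simp

lemma cone_desc {θ : ℝ} (hθ1 : 0 < θ) (hθ2 : θ < Real.pi / 2) :
    {p : ℝ × ℝ | ∃ r ≥ (0:ℝ), ∃ v ∈ Set.Icc (0:ℝ) θ, p = (r * Real.cos v, r * Real.sin v)}
      = {p : ℝ × ℝ | 0 ≤ p.2 ∧ p.2 ≤ Real.tan θ * p.1} := by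
  have hπ := Real.pi_pos
  have hcosθ : 0 < Real.cos θ := Real.cos_pos_of_mem_Ioo ⟨by linarith, hθ2⟩
  have htanθ : 0 < Real.tan θ := Real.tan_pos_of_pos_of_lt_pi_div_two hθ1 hθ2
  ext ⟨x, y⟩
  simp only [Set.mem_setOf_eq]
  constructor
  · rintro ⟨r, hr, v, ⟨hv0, hvθ⟩, h⟩
    have hx : x = r * Real.cos v := by simpa using congrArg Prod.fst h
    have hy : y = r * Real.sin v := by simpa using congrArg Prod.snd h
    have hcos : 0 < Real.cos v := Real.cos_pos_of_mem_Ioo ⟨by linarith, by linarith⟩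
    have hsin : 0 ≤ Real.sin v := Real.sin_nonneg_of_nonneg_of_le_pi hv0 (by linarith)
    constructor
    · rw [hy]; positivity
    · rw [hx, hy]
      have hkey : Real.sin v ≤ Real.tan θ * Real.cos v := by
        have h1 : 0 ≤ Real.sin (θ - v) := Real.sin_nonneg_of_nonneg_of_le_pi
          (by linarith) (by linarith)
        rw [Real.sin_sub] at h1
        rw [Real.tan_eq_sin_div_cos, div_mul_eq_mul_div, le_div_iff₀ hcosθ]
        nlinarith
      nlinarith
  · rintro ⟨hy0, hyx⟩
    have hx0 : 0 ≤ x := by nlinarith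
    rcases eq_or_lt_of_le hx0 with hx | hx
    · have hy : y = 0 := le_antisymm (by nlinarith) hy0
      exact ⟨0, le_refl 0, 0, ⟨le_refl 0, hθ1.le⟩, by simp [← hx, hy]⟩
    · set v := Real.arctan (y / x) with hv
      have hv0 : 0 ≤ v := by
        rw [hv, ← Real.arctan_zero]
        exact Real.arctan_strictMono.monotone (by positivity)
      have hvθ : v ≤ θ := by
        rw [hv, ← Real.arctan_tan (x := θ) (by linarith) hθ2]
        exact Real.arctan_strictMono.monotone (by rw [div_le_iff₀ hx]; nlinarith)
      have hcos : 0 < Real.cos v := Real.cos_pos_of_mem_Ioo ⟨by linarith, by linarith⟩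
      have htan : Real.tan v = y / x := Real.tan_arctan _
      refine ⟨x / Real.cos v, by positivity, v, ⟨hv0, hvθ⟩, ?_⟩
      have h1 : x / Real.cos v * Real.cos v = x := by field_simp
      have h2 : x / Real.cos v * Real.sin v = y := by
        have := htan
        rw [Real.tan_eq_sin_div_cos] at this
        field_simp at this ⊢
        nlinarith [this]
      rw [h1, h2]

noncomputable def coneKer (s : ℝ) (w z : ℝ × ℝ) : ℝ :=
  (2 * Real.pi * s)⁻¹ * Real.exp (-((z.1 - w.1) ^ 2 + (z.2 - w.2) ^ 2) / (2 * s))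

noncomputable def coneKerD (s : ℝ) (w z : ℝ × ℝ) : (ℝ × ℝ) →L[ℝ] ℝ :=
  coneKer s w z • (((z.1 - w.1) / s) • ContinuousLinearMap.fst ℝ ℝ ℝ
    + ((z.2 - w.2) / s) • ContinuousLinearMap.snd ℝ ℝ ℝ)

lemma coneKer_hasFDerivAt {s : ℝ} (hs : 0 < s) (z w : ℝ × ℝ) :
    HasFDerivAt (fun w => coneKer s w z) (coneKerD s w z) w := by
  have h1 : HasFDerivAt (fun w : ℝ × ℝ => z.1 - w.1)
      (-(ContinuousLinearMap.fst ℝ ℝ ℝ)) w := (hasFDerivAt_fst).const_sub z.1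
  have h2 : HasFDerivAt (fun w : ℝ × ℝ => z.2 - w.2)
      (-(ContinuousLinearMap.snd ℝ ℝ ℝ)) w := (hasFDerivAt_snd).const_sub z.2
  have h1sq : HasFDerivAt (fun w : ℝ × ℝ => (z.1 - w.1) ^ 2)
      ((2 * (z.1 - w.1)) • (-(ContinuousLinearMap.fst ℝ ℝ ℝ))) w := by
    have hfun : (fun w : ℝ × ℝ => (z.1 - w.1) ^ 2)
        = fun w : ℝ × ℝ => (z.1 - w.1) * (z.1 - w.1) := by funext w; ring
    rw [hfun, two_mul, add_smul]
    exact h1.mul h1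
  have h2sq : HasFDerivAt (fun w : ℝ × ℝ => (z.2 - w.2) ^ 2)
      ((2 * (z.2 - w.2)) • (-(ContinuousLinearMap.snd ℝ ℝ ℝ))) w := by
    have hfun : (fun w : ℝ × ℝ => (z.2 - w.2) ^ 2)
        = fun w : ℝ × ℝ => (z.2 - w.2) * (z.2 - w.2) := by funext w; ring
    rw [hfun, two_mul, add_smul]
    exact h2.mul h2
  have hq := ((h1sq.add h2sq).neg).mul_const (2 * s)⁻¹
  have he := (hq.exp).const_mul (2 * Real.pi * s)⁻¹
  have hfun2 : (fun w : ℝ × ℝ => coneKer s w z)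
      = fun w : ℝ × ℝ => (2 * Real.pi * s)⁻¹
        * Real.exp (-((z.1 - w.1) ^ 2 + (z.2 - w.2) ^ 2) * (2 * s)⁻¹) := by
    funext w; rw [coneKer, div_eq_mul_inv]
  rw [hfun2]
  refine he.congr_fderiv ?_
  refine ContinuousLinearMap.ext fun v => ?_
  simp only [coneKerD, coneKer, ContinuousLinearMap.smul_apply, ContinuousLinearMap.add_apply,
    ContinuousLinearMap.coe_fst', ContinuousLinearMap.coe_snd',
    ContinuousLinearMap.neg_apply, smul_eq_mul]
  simp only [Pi.add_apply, Pi.neg_apply]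
  ring

lemma coneKerD_norm_le {s : ℝ} (hs : 0 < s) (w z : ℝ × ℝ) :
    ‖coneKerD s w z‖ ≤ (2 * Real.pi * s)⁻¹
      * Real.exp (-((z.1 - w.1) ^ 2 + (z.2 - w.2) ^ 2) / (2 * s))
      * ((|z.1 - w.1| + |z.2 - w.2|) / s) := by
  apply ContinuousLinearMap.opNorm_le_bound _ (by positivity)
  intro v
  rw [coneKerD, coneKer]
  simp only [ContinuousLinearMap.add_apply, ContinuousLinearMap.smul_apply,
    ContinuousLinearMap.coe_fst', ContinuousLinearMap.coe_snd', smul_eq_mul,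
    Real.norm_eq_abs]
  have hv1 : |v.1| ≤ ‖v‖ := by
    rw [← Real.norm_eq_abs]; exact norm_fst_le v
  have hv2 : |v.2| ≤ ‖v‖ := by
    rw [← Real.norm_eq_abs]; exact norm_snd_le v
  set C := (2 * Real.pi * s)⁻¹ * Real.exp (-((z.1 - w.1) ^ 2 + (z.2 - w.2) ^ 2) / (2 * s))
    with hC
  have hC0 : 0 < C := by rw [hC]; positivity
  calc |C * ((z.1 - w.1) / s * v.1 + (z.2 - w.2) / s * v.2)|
      = C * |(z.1 - w.1) / s * v.1 + (z.2 - w.2) / s * v.2| := by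
        rw [abs_mul, abs_of_pos hC0]
    _ ≤ C * (|z.1 - w.1| / s * |v.1| + |z.2 - w.2| / s * |v.2|) := by
        apply mul_le_mul_of_nonneg_left _ hC0.le
        refine le_trans (abs_add_le _ _) ?_
        rw [abs_mul, abs_mul, abs_div, abs_div, abs_of_pos hs]
    _ ≤ C * (|z.1 - w.1| / s * ‖v‖ + |z.2 - w.2| / s * ‖v‖) := by
        apply mul_le_mul_of_nonneg_left _ hC0.le
        apply add_le_add <;> apply mul_le_mul_of_nonneg_left (by assumption) (by positivity)
    _ = C * ((|z.1 - w.1| + |z.2 - w.2|) / s) * ‖v‖ := by ring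

lemma bound_aux {s a b u v d e : ℝ} (hs : 0 < s) (hd : |d| ≤ 1) (he : |e| ≤ 1)
    (ha : a = u - d) (hb : b = v - e) :
    Real.exp (-(a ^ 2 + b ^ 2) / (2 * s)) * ((|a| + |b|) / s)
      ≤ Real.exp s⁻¹ * (2 / s) * ((|u| + 1) * Real.exp (-u ^ 2 / (2 * (2 * s))))
        * ((|v| + 1) * Real.exp (-v ^ 2 / (2 * (2 * s)))) := by
  have ha2 : a ^ 2 = (u - d) ^ 2 := by rw [ha]
  have hb2 : b ^ 2 = (v - e) ^ 2 := by rw [hb]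
  have hd2 : d ^ 2 ≤ 1 := by nlinarith [abs_nonneg d, sq_abs d]
  have he2 : e ^ 2 ≤ 1 := by nlinarith [abs_nonneg e, sq_abs e]
  have hexp : Real.exp (-(a ^ 2 + b ^ 2) / (2 * s))
      ≤ Real.exp s⁻¹ * (Real.exp (-u ^ 2 / (2 * (2 * s)))
        * Real.exp (-v ^ 2 / (2 * (2 * s)))) := by
    rw [← Real.exp_add, ← Real.exp_add]
    apply Real.exp_le_exp.2
    rw [← sub_nonneg]
    have heq : s⁻¹ + (-u ^ 2 / (2 * (2 * s)) + -v ^ 2 / (2 * (2 * s)))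
        - -(a ^ 2 + b ^ 2) / (2 * s)
        = (2 * (a ^ 2 + b ^ 2) + 4 - u ^ 2 - v ^ 2) / (4 * s) := by
      field_simp
      ring
    rw [heq]
    apply div_nonneg _ (by positivity)
    have h1 : 0 ≤ 2 * a ^ 2 + 2 - u ^ 2 := by nlinarith [sq_nonneg (u - 2 * d), ha2, hd2]
    have h2 : 0 ≤ 2 * b ^ 2 + 2 - v ^ 2 := by nlinarith [sq_nonneg (v - 2 * e), hb2, he2]
    nlinarith
  have habs : (|a| + |b|) / s ≤ 2 * ((|u| + 1) * (|v| + 1)) / s := by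
    have h1 : |a| ≤ |u| + 1 := by
      rw [ha]; calc |u - d| ≤ |u| + |d| := abs_sub u d
        _ ≤ |u| + 1 := by linarith
    have h2 : |b| ≤ |v| + 1 := by
      rw [hb]; calc |v - e| ≤ |v| + |e| := abs_sub v e
        _ ≤ |v| + 1 := by linarith
    have hnum : |a| + |b| ≤ 2 * ((|u| + 1) * (|v| + 1)) := by
      nlinarith [abs_nonneg u, abs_nonneg v]
    gcongr
  calc Real.exp (-(a ^ 2 + b ^ 2) / (2 * s)) * ((|a| + |b|) / s)
      ≤ (Real.exp s⁻¹ * (Real.exp (-u ^ 2 / (2 * (2 * s)))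
          * Real.exp (-v ^ 2 / (2 * (2 * s)))))
        * (2 * ((|u| + 1) * (|v| + 1)) / s) :=
      mul_le_mul hexp habs (by positivity) (by positivity)
    _ = Real.exp s⁻¹ * (2 / s) * ((|u| + 1) * Real.exp (-u ^ 2 / (2 * (2 * s))))
        * ((|v| + 1) * Real.exp (-v ^ 2 / (2 * (2 * s)))) := by ring

lemma integrable_coneKer {s : ℝ} (hs : 0 < s) (w : ℝ × ℝ) :
    Integrable (fun z : ℝ × ℝ => coneKer s w z) := by
  have h := (integrable_prod_fun (integrable_gauss hs w.1)
    (integrable_gauss hs w.2)).const_mul (2 * Real.pi * s)⁻¹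
  refine h.congr (Filter.Eventually.of_forall fun z => ?_)
  show (2 * Real.pi * s)⁻¹ * (_ * _) = coneKer s w z
  rw [coneKer, show -((z.1 - w.1) ^ 2 + (z.2 - w.2) ^ 2) / (2 * s)
    = -(z.1 - w.1) ^ 2 / (2 * s) + -(z.2 - w.2) ^ 2 / (2 * s) from by ring, Real.exp_add]

noncomputable def coneBound (s : ℝ) (w₀ : ℝ × ℝ) (z : ℝ × ℝ) : ℝ :=
  (2 * Real.pi * s)⁻¹ * Real.exp s⁻¹ * (2 / s)
    * ((|z.1 - w₀.1| + 1) * Real.exp (-(z.1 - w₀.1) ^ 2 / (2 * (2 * s))))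
    * ((|z.2 - w₀.2| + 1) * Real.exp (-(z.2 - w₀.2) ^ 2 / (2 * (2 * s))))

lemma integrable_coneBound {s : ℝ} (hs : 0 < s) (w₀ : ℝ × ℝ) :
    Integrable (coneBound s w₀) := by
  have h := (integrable_prod_fun (integrable_abs_gauss (by positivity : (0:ℝ) < 2 * s) w₀.1)
    (integrable_abs_gauss (by positivity : (0:ℝ) < 2 * s) w₀.2)).const_mul
    ((2 * Real.pi * s)⁻¹ * Real.exp s⁻¹ * (2 / s))
  refine h.congr (Filter.Eventually.of_forall fun z => ?_)
  show _ * (_ * _) = coneBound s w₀ z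
  rw [coneBound]
  ring

lemma coneKerD_le_bound {s : ℝ} (hs : 0 < s) (w₀ w z : ℝ × ℝ)
    (hw : w ∈ Metric.ball w₀ 1) :
    ‖coneKerD s w z‖ ≤ coneBound s w₀ z := by
  have hball := le_of_lt (Metric.mem_ball.1 hw)
  have hd : |w.1 - w₀.1| ≤ 1 := by
    calc |w.1 - w₀.1| = dist w.1 w₀.1 := (Real.dist_eq _ _).symm
      _ ≤ dist w w₀ := by rw [Prod.dist_eq]; exact le_max_left _ _
      _ ≤ 1 := hball
  have he : |w.2 - w₀.2| ≤ 1 := by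
    calc |w.2 - w₀.2| = dist w.2 w₀.2 := (Real.dist_eq _ _).symm
      _ ≤ dist w w₀ := by rw [Prod.dist_eq]; exact le_max_right _ _
      _ ≤ 1 := hball
  refine (coneKerD_norm_le hs w z).trans ?_
  have hb := bound_aux (a := z.1 - w.1) (b := z.2 - w.2) (u := z.1 - w₀.1) (v := z.2 - w₀.2)
    (d := w.1 - w₀.1) (e := w.2 - w₀.2) hs hd he (by ring) (by ring)
  calc (2 * Real.pi * s)⁻¹ * Real.exp (-((z.1 - w.1) ^ 2 + (z.2 - w.2) ^ 2) / (2 * s))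
        * ((|z.1 - w.1| + |z.2 - w.2|) / s)
      = (2 * Real.pi * s)⁻¹ * (Real.exp (-((z.1 - w.1) ^ 2 + (z.2 - w.2) ^ 2) / (2 * s))
        * ((|z.1 - w.1| + |z.2 - w.2|) / s)) := by ring
    _ ≤ (2 * Real.pi * s)⁻¹ * (Real.exp s⁻¹ * (2 / s)
        * ((|z.1 - w₀.1| + 1) * Real.exp (-(z.1 - w₀.1) ^ 2 / (2 * (2 * s))))
        * ((|z.2 - w₀.2| + 1) * Real.exp (-(z.2 - w₀.2) ^ 2 / (2 * (2 * s))))) := by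
        apply mul_le_mul_of_nonneg_left hb (by positivity)
    _ = coneBound s w₀ z := by rw [coneBound]; ring

lemma continuous_coneKer {s : ℝ} (hs : 0 < s) (w : ℝ × ℝ) :
    Continuous (fun z : ℝ × ℝ => coneKer s w z) := by
  unfold coneKer
  fun_prop

lemma hasFDerivAt_cone_integral {s : ℝ} (hs : 0 < s) {D : Set (ℝ × ℝ)}
    (hDm : MeasurableSet D) (w₀ : ℝ × ℝ) :
    HasFDerivAt (fun w : ℝ × ℝ => ∫ z in D, coneKer s w z)
      (∫ z in D, coneKerD s w₀ z) w₀ := by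
  apply hasFDerivAt_integral_of_dominated_of_fderiv_le (bound := coneBound s w₀)
    (s := Metric.ball w₀ 1) (Metric.ball_mem_nhds w₀ one_pos)
  · exact Filter.Eventually.of_forall fun w =>
      ((continuous_coneKer hs w).aestronglyMeasurable).restrict
  · exact (integrable_coneKer hs w₀).restrict
  · apply Continuous.aestronglyMeasurable
    apply Continuous.smul (continuous_coneKer hs w₀)
    apply Continuous.add
    · exact (by fun_prop : Continuous fun z : ℝ × ℝ => (z.1 - w₀.1) / s).smul continuous_const
    · exact (by fun_prop : Continuous fun z : ℝ × ℝ => (z.2 - w₀.2) / s).smul continuous_const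
  · exact Filter.Eventually.of_forall fun z w hw => coneKerD_le_bound hs w₀ w z hw
  · exact (integrable_coneBound hs w₀).restrict
  · exact Filter.Eventually.of_forall fun z w _ => coneKer_hasFDerivAt hs z w

lemma measurableSet_cone {c : ℝ} : MeasurableSet {p : ℝ × ℝ | 0 ≤ p.2 ∧ p.2 ≤ c * p.1} := by
  exact (measurableSet_le measurable_const measurable_snd).inter
    (measurableSet_le measurable_snd (measurable_fst.const_mul c))

lemma cone_integral_eq {c : ℝ} (hc : 0 < c) (g h : ℝ → ℝ) (hg : Integrable g)
    (hh : Integrable h) :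
    ∫ z in {p : ℝ × ℝ | 0 ≤ p.2 ∧ p.2 ≤ c * p.1}, g z.2 * h z.1
      = ∫ y in Set.Ioi (0:ℝ), g y * ∫ x in Set.Ioi (y / c), h x := by
  have hDm : MeasurableSet {p : ℝ × ℝ | 0 ≤ p.2 ∧ p.2 ≤ c * p.1} := measurableSet_cone
  have hφ : Integrable (fun z : ℝ × ℝ => g z.2 * h z.1) := by
    refine (integrable_prod_fun hh hg).congr (Filter.Eventually.of_forall fun z => ?_)
    exact mul_comm _ _
  have hind : Integrable (Set.indicator {p : ℝ × ℝ | 0 ≤ p.2 ∧ p.2 ≤ c * p.1}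
      (fun z : ℝ × ℝ => g z.2 * h z.1)) ((volume : Measure ℝ).prod volume) := by
    rw [← MeasureTheory.Measure.volume_eq_prod]
    exact hφ.indicator hDm
  rw [← integral_indicator hDm, MeasureTheory.Measure.volume_eq_prod,
    integral_prod_symm _ hind]
  have hinner : ∀ y : ℝ,
      (∫ x, Set.indicator {p : ℝ × ℝ | 0 ≤ p.2 ∧ p.2 ≤ c * p.1}
        (fun z : ℝ × ℝ => g z.2 * h z.1) (x, y))
      = Set.indicator (Set.Ici (0:ℝ)) (fun y => g y * ∫ x in Set.Ioi (y / c), h x) y := by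
    intro y
    by_cases hy : 0 ≤ y
    · have hx : ∀ x : ℝ, Set.indicator {p : ℝ × ℝ | 0 ≤ p.2 ∧ p.2 ≤ c * p.1}
          (fun z : ℝ × ℝ => g z.2 * h z.1) (x, y)
          = Set.indicator (Set.Ici (y / c)) (fun x => g y * h x) x := by
        intro x
        rw [Set.indicator_apply, Set.indicator_apply]
        have hiff : (x, y) ∈ {p : ℝ × ℝ | 0 ≤ p.2 ∧ p.2 ≤ c * p.1}
            ↔ x ∈ Set.Ici (y / c) := by
          simp only [Set.mem_setOf_eq, Set.mem_Ici]
          constructor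
          · rintro ⟨-, h2⟩
            rw [div_le_iff₀ hc]
            linarith
          · intro hx
            rw [div_le_iff₀ hc] at hx
            exact ⟨hy, by linarith⟩
        rw [if_congr hiff rfl rfl]
      simp_rw [hx]
      rw [integral_indicator measurableSet_Ici, Set.indicator_of_mem (Set.mem_Ici.2 hy),
        integral_Ici_eq_integral_Ioi, integral_const_mul]
    · have hx : ∀ x : ℝ, Set.indicator {p : ℝ × ℝ | 0 ≤ p.2 ∧ p.2 ≤ c * p.1}
          (fun z : ℝ × ℝ => g z.2 * h z.1) (x, y) = 0 := by
        intro x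
        exact Set.indicator_of_notMem (fun hmem => hy hmem.1) _
      simp_rw [hx]
      rw [integral_zero, Set.indicator_of_notMem (by simpa using hy)]
  simp_rw [hinner]
  rw [integral_indicator measurableSet_Ici, integral_Ici_eq_integral_Ioi]

lemma key_integral {s c : ℝ} (hs : 0 < s) (hc : 0 < c) (wx wy : ℝ) :
    ∫ z in {p : ℝ × ℝ | 0 ≤ p.2 ∧ p.2 ≤ c * p.1},
        ((2 * Real.pi * s)⁻¹ * Real.exp (-((z.1 - wx) ^ 2 + (z.2 - wy) ^ 2) / (2 * s)))
          * ((z.1 - wx) / s)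
      = Real.exp (-(wy / c - wx) ^ 2 / (2 * s * (1 + 1 / c ^ 2)))
          / Real.sqrt (2 * Real.pi * s * (1 + 1 / c ^ 2))
          * stdNormalCDF ((wx / c + wy) / Real.sqrt (s * (1 + 1 / c ^ 2))) := by
  have hπ := Real.pi_pos
  have hk : (0:ℝ) < 1 + 1 / c ^ 2 := by positivity
  have hsplit : ∀ z : ℝ × ℝ,
      ((2 * Real.pi * s)⁻¹ * Real.exp (-((z.1 - wx) ^ 2 + (z.2 - wy) ^ 2) / (2 * s)))
        * ((z.1 - wx) / s)
      = ((2 * Real.pi * s)⁻¹ * Real.exp (-(z.2 - wy) ^ 2 / (2 * s)))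
        * ((z.1 - wx) / s * Real.exp (-(z.1 - wx) ^ 2 / (2 * s))) := by
    intro z
    rw [show -((z.1 - wx) ^ 2 + (z.2 - wy) ^ 2) / (2 * s)
      = -(z.2 - wy) ^ 2 / (2 * s) + -(z.1 - wx) ^ 2 / (2 * s) from by ring, Real.exp_add]
    ring
  simp_rw [hsplit]
  have hgint : Integrable (fun y : ℝ => (2 * Real.pi * s)⁻¹
      * Real.exp (-(y - wy) ^ 2 / (2 * s))) := (integrable_gauss hs wy).const_mul _
  have hhint : Integrable (fun x : ℝ => (x - wx) / s
      * Real.exp (-(x - wx) ^ 2 / (2 * s))) := by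
    refine ((integrable_lin_gauss hs wx).const_mul s⁻¹).congr
      (Filter.Eventually.of_forall fun x => ?_)
    show s⁻¹ * _ = _
    ring
  rw [cone_integral_eq hc _ _ hgint hhint]
  simp_rw [gauss_inner hs wx]
  have hpt : ∀ y : ℝ, (2 * Real.pi * s)⁻¹ * Real.exp (-(y - wy) ^ 2 / (2 * s))
      * Real.exp (-(y / c - wx) ^ 2 / (2 * s))
      = ((2 * Real.pi * s)⁻¹ * Real.exp (-(wy / c - wx) ^ 2 / (2 * s * (1 + 1 / c ^ 2))))
        * Real.exp (-(y - (wy + wx / c) / (1 + 1 / c ^ 2)) ^ 2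
            / (2 * (s / (1 + 1 / c ^ 2)))) := by
    intro y
    rw [mul_assoc ((2 * Real.pi * s)⁻¹), ← Real.exp_add, complete_sq hs hc wx wy y,
      Real.exp_add, ← mul_assoc]
  simp_rw [hpt]
  rw [integral_const_mul, gauss_tail (by positivity : (0:ℝ) < s / (1 + 1 / c ^ 2))]
  have hsqne : Real.sqrt (s * (1 + 1 / c ^ 2)) ≠ 0 := by positivity
  have hsq : Real.sqrt (s * (1 + 1 / c ^ 2))
      = Real.sqrt (s / (1 + 1 / c ^ 2)) * (1 + 1 / c ^ 2) := by
    rw [show s * (1 + 1 / c ^ 2) = s / (1 + 1 / c ^ 2) * (1 + 1 / c ^ 2) ^ 2 from by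
      field_simp, Real.sqrt_mul (by positivity), Real.sqrt_sq hk.le]
  have harg : (wy + wx / c) / (1 + 1 / c ^ 2) / Real.sqrt (s / (1 + 1 / c ^ 2))
      = (wx / c + wy) / Real.sqrt (s * (1 + 1 / c ^ 2)) := by
    rw [hsq]
    field_simp
    ring
  have hprod : Real.sqrt (s / (1 + 1 / c ^ 2)) * Real.sqrt (2 * Real.pi)
      * Real.sqrt (2 * Real.pi * s * (1 + 1 / c ^ 2)) = 2 * Real.pi * s := by
    rw [← Real.sqrt_mul (by positivity), ← Real.sqrt_mul (by positivity),
      show s / (1 + 1 / c ^ 2) * (2 * Real.pi) * (2 * Real.pi * s * (1 + 1 / c ^ 2))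
        = (2 * Real.pi * s) ^ 2 from by field_simp]
    exact Real.sqrt_sq (by positivity)
  have hconst : (2 * Real.pi * s)⁻¹ * Real.sqrt (s / (1 + 1 / c ^ 2))
      * Real.sqrt (2 * Real.pi) = (Real.sqrt (2 * Real.pi * s * (1 + 1 / c ^ 2)))⁻¹ := by
    have hone : (2 * Real.pi * s)⁻¹ * Real.sqrt (s / (1 + 1 / c ^ 2))
        * Real.sqrt (2 * Real.pi) * Real.sqrt (2 * Real.pi * s * (1 + 1 / c ^ 2)) = 1 := by
      rw [show (2 * Real.pi * s)⁻¹ * Real.sqrt (s / (1 + 1 / c ^ 2))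
        * Real.sqrt (2 * Real.pi) * Real.sqrt (2 * Real.pi * s * (1 + 1 / c ^ 2))
        = (2 * Real.pi * s)⁻¹ * (Real.sqrt (s / (1 + 1 / c ^ 2)) * Real.sqrt (2 * Real.pi)
          * Real.sqrt (2 * Real.pi * s * (1 + 1 / c ^ 2))) from by ring, hprod,
        inv_mul_cancel₀ (by positivity)]
    exact eq_inv_of_mul_eq_one_left hone
  rw [harg]
  calc (2 * Real.pi * s)⁻¹ * Real.exp (-(wy / c - wx) ^ 2 / (2 * s * (1 + 1 / c ^ 2)))
        * (Real.sqrt (s / (1 + 1 / c ^ 2)) * Real.sqrt (2 * Real.pi)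
          * stdNormalCDF ((wx / c + wy) / Real.sqrt (s * (1 + 1 / c ^ 2))))
      = ((2 * Real.pi * s)⁻¹ * Real.sqrt (s / (1 + 1 / c ^ 2)) * Real.sqrt (2 * Real.pi))
        * Real.exp (-(wy / c - wx) ^ 2 / (2 * s * (1 + 1 / c ^ 2)))
        * stdNormalCDF ((wx / c + wy) / Real.sqrt (s * (1 + 1 / c ^ 2))) := by ring
    _ = (Real.sqrt (2 * Real.pi * s * (1 + 1 / c ^ 2)))⁻¹
        * Real.exp (-(wy / c - wx) ^ 2 / (2 * s * (1 + 1 / c ^ 2)))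
        * stdNormalCDF ((wx / c + wy) / Real.sqrt (s * (1 + 1 / c ^ 2))) := by rw [hconst]
    _ = Real.exp (-(wy / c - wx) ^ 2 / (2 * s * (1 + 1 / c ^ 2)))
        / Real.sqrt (2 * Real.pi * s * (1 + 1 / c ^ 2))
        * stdNormalCDF ((wx / c + wy) / Real.sqrt (s * (1 + 1 / c ^ 2))) := by
        rw [div_eq_mul_inv (Real.exp (-(wy / c - wx) ^ 2 / (2 * s * (1 + 1 / c ^ 2))))]
        ring


/-- Explicit formula for the partial derivative in w_x of the Gaussian
probability F(w) = P(w + √s·Z ∈ D) of a cone D of opening angle θ. -/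
theorem cone_probability_partial_deriv_wx
    (s θ : ℝ) (hs : 0 < s) (hθ1 : 0 < θ) (hθ2 : θ < Real.pi / 2)
    (D : Set (ℝ × ℝ))
    (hD : D = {p : ℝ × ℝ | ∃ r ≥ (0 : ℝ), ∃ v ∈ Set.Icc (0 : ℝ) θ,
      p = (r * Real.cos v, r * Real.sin v)})
    (F : ℝ × ℝ → ℝ)
    (hF : ∀ wx wy, F (wx, wy) = ∫ z in D,
      (2 * Real.pi * s)⁻¹ * Real.exp (-((z.1 - wx) ^ 2 + (z.2 - wy) ^ 2) / (2 * s))) :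
    Differentiable ℝ F ∧
    ∀ wx wy, deriv (fun a => F (a, wy)) wx =
      Real.exp (-(wy / Real.tan θ - wx) ^ 2 / (2 * s * (1 + 1 / Real.tan θ ^ 2)))
        / Real.sqrt (2 * Real.pi * s * (1 + 1 / Real.tan θ ^ 2))
        * stdNormalCDF ((wx / Real.tan θ + wy)
            / Real.sqrt (s * (1 + 1 / Real.tan θ ^ 2))) := by
  have hπ := Real.pi_pos
  have hc : 0 < Real.tan θ := Real.tan_pos_of_pos_of_lt_pi_div_two hθ1 hθ2
  have hDeq : D = {p : ℝ × ℝ | 0 ≤ p.2 ∧ p.2 ≤ Real.tan θ * p.1} := by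
    rw [hD, cone_desc hθ1 hθ2]
  have hDm : MeasurableSet D := hDeq ▸ measurableSet_cone
  have hFeq : F = fun w : ℝ × ℝ => ∫ z in D, coneKer s w z := by
    funext w
    exact hF w.1 w.2
  have hFD : ∀ w : ℝ × ℝ, HasFDerivAt F (∫ z in D, coneKerD s w z) w := by
    intro w
    rw [hFeq]
    exact hasFDerivAt_cone_integral hs hDm w
  refine ⟨fun w => (hFD w).differentiableAt, fun wx wy => ?_⟩
  have hcomp : HasDerivAt (fun a : ℝ => ((a, wy) : ℝ × ℝ)) ((1:ℝ), (0:ℝ)) wx :=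
    (hasDerivAt_id wx).prodMk (hasDerivAt_const wx wy)
  have hder : HasDerivAt (fun a : ℝ => F (a, wy))
      ((∫ z in D, coneKerD s (wx, wy) z) ((1:ℝ), (0:ℝ))) wx :=
    (hFD (wx, wy)).comp_hasDerivAt wx hcomp
  rw [hder.deriv]
  have hKmeas : AEStronglyMeasurable (fun z => coneKerD s (wx, wy) z)
      (volume.restrict D) := by
    apply Continuous.aestronglyMeasurable
    apply Continuous.smul (continuous_coneKer hs (wx, wy))
    apply Continuous.add
    · exact (by fun_prop : Continuous fun z : ℝ × ℝ => (z.1 - (wx, wy).1) / s).smul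
        continuous_const
    · exact (by fun_prop : Continuous fun z : ℝ × ℝ => (z.2 - (wx, wy).2) / s).smul
        continuous_const
  have hKint : Integrable (fun z => coneKerD s (wx, wy) z) (volume.restrict D) := by
    refine ((integrable_coneBound hs (wx, wy)).restrict (s := D)).mono hKmeas ?_
    refine Filter.Eventually.of_forall fun z => ?_
    refine le_trans (coneKerD_le_bound hs (wx, wy) (wx, wy) z
      (Metric.mem_ball_self one_pos)) ?_
    exact le_abs_self _
  rw [ContinuousLinearMap.integral_apply hKint ((1:ℝ), (0:ℝ))]
  have happ : ∀ z : ℝ × ℝ, (coneKerD s (wx, wy) z) ((1:ℝ), (0:ℝ))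
      = ((2 * Real.pi * s)⁻¹
          * Real.exp (-((z.1 - wx) ^ 2 + (z.2 - wy) ^ 2) / (2 * s)))
        * ((z.1 - wx) / s) := by
    intro z
    rw [coneKerD, coneKer]
    simp only [ContinuousLinearMap.smul_apply, ContinuousLinearMap.add_apply,
      ContinuousLinearMap.coe_fst', ContinuousLinearMap.coe_snd', smul_eq_mul]
    ring
  simp_rw [happ]
  rw [hDeq]
  exact key_integral hs hc wx wy
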